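/- Let A ∈ End(ℂ^n) satisfy the reflection equation with the standard Uq(gl(n)) braid matrix (q generic). If for some indices i > m the entry A^m_i is nonzero (i.e. i ∈ Y₊, a nonzero entry above the diagonal in column i with row m = σ(i) < i), then the diagonal entry A^i_i = 0; and if for some i < m the entry A^m_i is nonzero, then A^m_m = 0. -/
import Mathlib


open Matrix Kronecker

/-- The coefficient `s_{ik}`: `q - q⁻¹` if `i < k`, `q` if `i = k`, `0` if `i > k`. -/
noncomputable def sCoeff {n : ℕ} (q : ℂ) (i k : Fin n) : ℂ :=
  if (i : ℕ) < (k : ℕ) then q - q⁻¹ else if i = k then q else 0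

/-- The standard `U_q(gl(n))` braid matrix
`S = Σ_{i,k} s_{ik} e^i_i ⊗ e^k_k + Σ_{i≠j} e^i_j ⊗ e^j_i` on `ℂ^n ⊗ ℂ^n`. -/
noncomputable def braidS (n : ℕ) (q : ℂ) :
    Matrix (Fin n × Fin n) (Fin n × Fin n) ℂ :=
  fun p r =>
    (if p.1 = r.1 ∧ p.2 = r.2 then sCoeff q p.1 p.2 else 0) +
    (if p.1 ≠ p.2 ∧ r.1 = p.2 ∧ r.2 = p.1 then 1 else 0)

/-- `A₂ = 1 ⊗ A` on `ℂ^n ⊗ ℂ^n`. -/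
noncomputable def A2 {n : ℕ} (A : Matrix (Fin n) (Fin n) ℂ) :
    Matrix (Fin n × Fin n) (Fin n × Fin n) ℂ :=
  (1 : Matrix (Fin n) (Fin n) ℂ) ⊗ₖ A

/-- The reflection equation `S A₂ S A₂ = A₂ S A₂ S`. -/
noncomputable def RE (n : ℕ) (q : ℂ) (A : Matrix (Fin n) (Fin n) ℂ) : Prop :=
  braidS n q * A2 A * braidS n q * A2 A = A2 A * braidS n q * A2 A * braidS n q


lemma braidS_mul_apply {n : ℕ} (q : ℂ) (M : Matrix (Fin n × Fin n) (Fin n × Fin n) ℂ)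
    (p r : Fin n × Fin n) :
    (braidS n q * M) p r =
      sCoeff q p.1 p.2 * M p r + (if p.1 = p.2 then 0 else M (p.2, p.1) r) := by
  obtain ⟨p1, p2⟩ := p
  rw [Matrix.mul_apply]
  have key : ∀ u : Fin n × Fin n, braidS n q (p1, p2) u * M u r =
      (if u = (p1, p2) then sCoeff q p1 p2 * M (p1, p2) r else 0) +
      (if u = (p2, p1) then (if p1 = p2 then 0 else M (p2, p1) r) else 0) := by
    rintro ⟨u1, u2⟩
    by_cases h1 : u1 = p1 <;> by_cases h2 : u2 = p2 <;> by_cases h3 : u1 = p2 <;>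
      by_cases h4 : u2 = p1 <;> by_cases h5 : p1 = p2 <;>
      simp_all [braidS, add_mul] <;> (intros; subst_vars; tauto)
  rw [Finset.sum_congr rfl fun u _ => key u]
  rw [Finset.sum_add_distrib]
  simp [Finset.sum_ite_eq']

lemma mul_braidS_apply {n : ℕ} (q : ℂ) (M : Matrix (Fin n × Fin n) (Fin n × Fin n) ℂ)
    (p r : Fin n × Fin n) :
    (M * braidS n q) p r =
      M p r * sCoeff q r.1 r.2 + (if r.1 = r.2 then 0 else M p (r.2, r.1)) := by
  obtain ⟨r1, r2⟩ := r
  rw [Matrix.mul_apply]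
  have key : ∀ u : Fin n × Fin n, M p u * braidS n q u (r1, r2) =
      (if u = (r1, r2) then M p (r1, r2) * sCoeff q r1 r2 else 0) +
      (if u = (r2, r1) then (if r1 = r2 then 0 else M p (r2, r1)) else 0) := by
    rintro ⟨u1, u2⟩
    by_cases h1 : u1 = r1 <;> by_cases h2 : u2 = r2 <;> by_cases h3 : u1 = r2 <;>
      by_cases h4 : u2 = r1 <;> by_cases h5 : r1 = r2 <;>
      simp_all [braidS, mul_add] <;> (intros; subst_vars; tauto)
  rw [Finset.sum_congr rfl fun u _ => key u]
  rw [Finset.sum_add_distrib]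
  simp [Finset.sum_ite_eq']

lemma mul_A2_apply {n : ℕ} (A : Matrix (Fin n) (Fin n) ℂ)
    (M : Matrix (Fin n × Fin n) (Fin n × Fin n) ℂ) (p r : Fin n × Fin n) :
    (M * A2 A) p r = ∑ f, M p (r.1, f) * A f r.2 := by
  rw [Matrix.mul_apply, Fintype.sum_prod_type]
  simp only [A2, Matrix.kroneckerMap_apply, Matrix.one_apply, mul_ite, mul_one,
    mul_zero, ite_mul, zero_mul, ← mul_assoc]
  rw [Finset.sum_comm]
  simp [Finset.sum_ite_eq, Finset.sum_ite_eq']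

lemma A2_mul_apply {n : ℕ} (A : Matrix (Fin n) (Fin n) ℂ)
    (M : Matrix (Fin n × Fin n) (Fin n × Fin n) ℂ) (p r : Fin n × Fin n) :
    (A2 A * M) p r = ∑ d, A p.2 d * M (p.1, d) r := by
  rw [Matrix.mul_apply, Fintype.sum_prod_type]
  simp [A2, Matrix.one_apply, ite_mul, zero_mul, one_mul,
    Finset.sum_ite_eq, Finset.sum_ite_eq']

lemma A2_apply {n : ℕ} (A : Matrix (Fin n) (Fin n) ℂ) (p r : Fin n × Fin n) :
    A2 A p r = if p.1 = r.1 then A p.2 r.2 else 0 := by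
  simp [A2, Matrix.one_apply, ite_mul, zero_mul, one_mul]

lemma sum_guard {n : ℕ} {a b : Fin n} (hab : a ≠ b) (f : Fin n → ℂ) :
    (∑ x, if a = x then 0 else if b = x then f x else 0) = f b := by
  have : ∀ x, (if a = x then 0 else if b = x then f x else 0)
      = if b = x then f x else 0 := by
    intro x
    by_cases hb : b = x
    · subst hb; simp [hab]
    · simp [hb]
  rw [Finset.sum_congr rfl fun x _ => this x]
  simp [Finset.sum_ite_eq]

lemma rowRel {n : ℕ} {q : ℂ} {A : Matrix (Fin n) (Fin n) ℂ} (hA : RE n q A)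
    {m i k : Fin n} (h1 : (m : ℕ) < (i : ℕ)) (h2 : (i : ℕ) < (k : ℕ)) :
    (q⁻¹ - 1) * (A m i * A m k) = 0 := by
  have hmi : m ≠ i := fun h => by simp [h] at h1
  have him : i ≠ m := hmi.symm
  have hik : i ≠ k := fun h => by simp [h] at h2
  have hmk : m ≠ k := fun h => by subst h; omega
  have h := congrFun (congrFun hA ((m, m) : Fin n × Fin n)) ((i, k) : Fin n × Fin n)
  simp only [mul_A2_apply, mul_braidS_apply, braidS_mul_apply, A2_mul_apply,
    A2_apply] at h
  have s1 : sCoeff q m m = q := by simp [sCoeff]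
  have s2 : sCoeff q i k = q - q⁻¹ := by simp [sCoeff, h2]
  simp [braidS, hmi, him, hik, hmk, s1, s2, Finset.sum_ite_eq, Finset.sum_ite_eq',
    mul_ite, ite_mul, mul_zero, zero_mul, Finset.sum_add_distrib, ite_and] at h
  have hkm : k ≠ m := fun h => by subst h; omega
  rw [sum_guard him, sum_guard him, sum_guard hkm] at h
  linear_combination h

lemma sum_guard' {n : ℕ} {a b : Fin n} (hab : a ≠ b) (f : Fin n → ℂ) :
    (∑ x, if a = x then 0 else if x = b then f x else 0) = f b := by
  have : ∀ x, (if a = x then 0 else if x = b then f x else 0)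
      = if x = b then f x else 0 := by
    intro x
    by_cases hb : x = b
    · subst hb; simp [hab]
    · simp [hb]
  rw [Finset.sum_congr rfl fun x _ => this x]
  simp [Finset.sum_ite_eq']

lemma sum_guard_add {n : ℕ} {a : Fin n} (f g : Fin n → ℂ) :
    (∑ x, if a = x then 0 else f x + g x)
      = (∑ x, if a = x then 0 else f x) + (∑ x, if a = x then 0 else g x) := by
  rw [← Finset.sum_add_distrib]
  exact Finset.sum_congr rfl fun x _ => by by_cases h : a = x <;> simp [h]

lemma colRel {n : ℕ} {q : ℂ} {A : Matrix (Fin n) (Fin n) ℂ} (hA : RE n q A)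
    {m i k : Fin n} (h1 : (i : ℕ) < (m : ℕ)) (h2 : (m : ℕ) < (k : ℕ)) :
    (1 - q⁻¹) * (A m i * A k i) = 0 := by
  have him : i ≠ m := fun h => by subst h; omega
  have hmi : m ≠ i := him.symm
  have hmk : m ≠ k := fun h => by subst h; omega
  have hkm : k ≠ m := hmk.symm
  have hik : i ≠ k := fun h => by subst h; omega
  have hki : k ≠ i := hik.symm
  have h := congrFun (congrFun hA ((m, k) : Fin n × Fin n)) ((i, i) : Fin n × Fin n)
  simp only [mul_A2_apply, mul_braidS_apply, braidS_mul_apply, A2_mul_apply,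
    A2_apply] at h
  have s1 : sCoeff q m k = q - q⁻¹ := by simp [sCoeff, h2]
  have s2 : sCoeff q i i = q := by simp [sCoeff]
  simp [braidS, hmi, him, hik, hmk, hkm, hki, s1, s2, Finset.sum_ite_eq, Finset.sum_ite_eq',
    mul_ite, ite_mul, mul_zero, zero_mul, Finset.sum_add_distrib, ite_and,
    add_mul, sum_guard_add] at h
  rw [sum_guard him, sum_guard' hik, sum_guard him] at h
  linear_combination h

lemma sum1Rel {n : ℕ} {q : ℂ} {A : Matrix (Fin n) (Fin n) ℂ} (hA : RE n q A)
    {m i : Fin n} (h1 : (m : ℕ) < (i : ℕ)) :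
    A i i * A m i = q * ∑ d, sCoeff q i d * (A m d * A d i) := by
  have hmi : m ≠ i := fun h => by subst h; omega
  have him : i ≠ m := hmi.symm
  have s1 : sCoeff q i m = 0 := by
    have : ¬ (i:ℕ) < (m:ℕ) := by omega
    simp [sCoeff, him, this]
  have s2 : sCoeff q i i = q := by simp [sCoeff]
  have h := congrFun (congrFun hA ((i, m) : Fin n × Fin n)) ((i, i) : Fin n × Fin n)
  simp only [mul_A2_apply, mul_braidS_apply, braidS_mul_apply, A2_mul_apply,
    A2_apply] at h
  simp [braidS, hmi, him, s1, s2, Finset.sum_ite_eq, Finset.sum_ite_eq',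
    mul_ite, ite_mul, mul_zero, zero_mul, Finset.sum_add_distrib, ite_and,
    add_mul, sum_guard_add] at h
  rw [sum_guard' him] at h
  rw [show (∑ x : Fin n, if i = x then 0 else if i = x then A m i * A x i else 0) = 0
      from Finset.sum_eq_zero fun x _ => by by_cases hx : i = x <;> simp [hx]] at h
  rw [show (∑ x : Fin n, A m x * sCoeff q i x * A x i)
      = ∑ d, sCoeff q i d * (A m d * A d i) from Finset.sum_congr rfl fun x _ => by ring] at h
  linear_combination h

lemma sum2Rel {n : ℕ} {q : ℂ} {A : Matrix (Fin n) (Fin n) ℂ} (hA : RE n q A)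
    {m i : Fin n} (h1 : (i : ℕ) < (m : ℕ)) :
    q * ∑ d, sCoeff q m d * (A m d * A d i) = A m i * A m m := by
  have him : i ≠ m := fun h => by subst h; omega
  have hmi : m ≠ i := him.symm
  have s1 : sCoeff q m i = 0 := by
    have : ¬ (m:ℕ) < (i:ℕ) := by omega
    simp [sCoeff, hmi, this]
  have s2 : sCoeff q m m = q := by simp [sCoeff]
  have h := congrFun (congrFun hA ((m, m) : Fin n × Fin n)) ((m, i) : Fin n × Fin n)
  simp only [mul_A2_apply, mul_braidS_apply, braidS_mul_apply, A2_mul_apply,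
    A2_apply] at h
  simp [braidS, hmi, him, s1, s2, Finset.sum_ite_eq, Finset.sum_ite_eq',
    mul_ite, ite_mul, mul_zero, zero_mul, Finset.sum_add_distrib, ite_and,
    add_mul, sum_guard_add] at h
  rw [sum_guard him] at h
  rw [show (∑ x : Fin n, if m = x then 0 else if m = x then q * A m m * A x i else 0) = 0
      from Finset.sum_eq_zero fun x _ => by by_cases hx : m = x <;> simp [hx]] at h
  rw [show (∑ x : Fin n, q * A m x * sCoeff q m x * A x i)
      = q * ∑ d, sCoeff q m d * (A m d * A d i) from by
        rw [Finset.mul_sum]; exact Finset.sum_congr rfl fun x _ => by ring] at h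
  linear_combination h

/-- For a solution of the reflection equation: if `A^m_i ≠ 0` with `m < i`
(a nonzero entry above the diagonal in column `i`) then `A^i_i = 0`, and if
`A^m_i ≠ 0` with `i < m` then `A^m_m = 0`. -/

theorem RE_vanishing_diagonal (n : ℕ) (hn : 1 ≤ n) (q : ℂ) (hq : q ≠ 0)
    (hq2 : q ^ 2 ≠ 1) (A : Matrix (Fin n) (Fin n) ℂ) (hA : RE n q A) :
    (∀ i m : Fin n, (m : ℕ) < (i : ℕ) → A m i ≠ 0 → A i i = 0) ∧
    (∀ i m : Fin n, (i : ℕ) < (m : ℕ) → A m i ≠ 0 → A m m = 0) := by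
  have hq1 : q ≠ 1 := fun h => hq2 (by rw [h]; ring)
  have hinv : q⁻¹ - 1 ≠ 0 := sub_ne_zero.mpr fun h => hq1 (inv_eq_one.mp h)
  have hinv' : (1 : ℂ) - q⁻¹ ≠ 0 := fun h => hinv (by linear_combination -h)
  have hsq : (1 : ℂ) - q ^ 2 ≠ 0 := sub_ne_zero.mpr fun h => hq2 h.symm
  constructor
  · intro i m hlt hne
    have h := sum1Rel hA hlt
    rw [show (∑ d, sCoeff q i d * (A m d * A d i))
        = sCoeff q i i * (A m i * A i i) from
      Finset.sum_eq_single i (fun d _ hd => ?_) (by simp)] at h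
    · have s2 : sCoeff q i i = q := by simp [sCoeff]
      rw [s2] at h
      have hz : (1 - q ^ 2) * (A m i * A i i) = 0 := by linear_combination h
      rcases mul_eq_zero.mp hz with h' | h'
      · exact absurd h' hsq
      · rcases mul_eq_zero.mp h' with h'' | h''
        · exact absurd h'' hne
        · exact h''
    · rcases lt_or_ge (d : ℕ) (i : ℕ) with hd' | hd'
      · have hne' : ¬ i = d := fun h => hd (by simp [h])
        have : ¬ (i : ℕ) < (d : ℕ) := by omega
        simp [sCoeff, hne', this]
      · have hid : (i : ℕ) < (d : ℕ) := by
          rcases Nat.lt_or_ge (i : ℕ) (d : ℕ) with h' | h'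
          · exact h'
          · exact absurd (Fin.ext (by omega)) hd
        have hrr := rowRel hA hlt hid
        rcases mul_eq_zero.mp hrr with h' | h'
        · exact absurd h' hinv
        · rcases mul_eq_zero.mp h' with h'' | h''
          · exact absurd h'' hne
          · simp [h'']
  · intro i m hlt hne
    have h := sum2Rel hA hlt
    rw [show (∑ d, sCoeff q m d * (A m d * A d i))
        = sCoeff q m m * (A m m * A m i) from
      Finset.sum_eq_single m (fun d _ hd => ?_) (by simp)] at h
    · have s2 : sCoeff q m m = q := by simp [sCoeff]
      rw [s2] at h
      have hz : (q ^ 2 - 1) * (A m m * A m i) = 0 := by linear_combination h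
      rcases mul_eq_zero.mp hz with h' | h'
      · exact absurd h' (fun h'' => hsq (by linear_combination -h''))
      · rcases mul_eq_zero.mp h' with h'' | h''
        · exact h''
        · exact absurd h'' hne
    · rcases lt_or_ge (d : ℕ) (m : ℕ) with hd' | hd'
      · have hne' : ¬ m = d := fun h => hd (by simp [h])
        have : ¬ (m : ℕ) < (d : ℕ) := by omega
        simp [sCoeff, hne', this]
      · have hmd : (m : ℕ) < (d : ℕ) := by
          rcases Nat.lt_or_ge (m : ℕ) (d : ℕ) with h' | h'
          · exact h'
          · exact absurd (Fin.ext (by omega)) hd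
        have hcc := colRel hA hlt hmd
        rcases mul_eq_zero.mp hcc with h' | h'
        · exact absurd h' hinv'
        · rcases mul_eq_zero.mp h' with h'' | h''
          · exact absurd h'' hne
          · simp [h'']
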